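/- For every integer n ≥ 3, any set of at least (2n-4 choose n-2) + 1 points in the plane in general position (no three collinear) contains n points in convex position. -/

import Mathlib

/-- A finite planar point set is in general position if no three of its points are collinear. -/
def GenPos (S : Finset (ℝ × ℝ)) : Prop :=
  ∀ T ⊆ S, T.card = 3 → ¬ Collinear ℝ (T : Set (ℝ × ℝ))

/-- A finite planar point set is in convex position if no point lies in the
convex hull of the others. -/
def ConvexPos (S : Finset (ℝ × ℝ)) : Prop :=
  ∀ p ∈ S, p ∉ convexHull ℝ ((S.erase p : Finset (ℝ × ℝ)) : Set (ℝ × ℝ))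

noncomputable section ErdosSzekeresAux
open Classical

/-- slope between two planar points -/
def slp (p q : ℝ × ℝ) : ℝ := (q.2 - p.2) / (q.1 - p.1)

lemma slp_avg {a b c : ℝ × ℝ} (h1 : a.1 < b.1) (h2 : b.1 < c.1) :
    slp a c = ((b.1 - a.1) * slp a b + (c.1 - b.1) * slp b c) / (c.1 - a.1) := by
  unfold slp
  have d1 : b.1 - a.1 ≠ 0 := by linarith
  have d2 : c.1 - b.1 ≠ 0 := by linarith
  have d3 : c.1 - a.1 ≠ 0 := by linarith
  field_simp
  ring

lemma slp_lt_left {a b c : ℝ × ℝ} (h1 : a.1 < b.1) (h2 : b.1 < c.1) :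
    slp a b < slp a c ↔ slp a b < slp b c := by
  rw [slp_avg h1 h2]
  have d3 : (0:ℝ) < c.1 - a.1 := by linarith
  rw [lt_div_iff₀ d3]
  constructor <;> intro h <;> nlinarith

lemma slp_lt_right {a b c : ℝ × ℝ} (h1 : a.1 < b.1) (h2 : b.1 < c.1) :
    slp a c < slp b c ↔ slp a b < slp b c := by
  rw [slp_avg h1 h2]
  have d3 : (0:ℝ) < c.1 - a.1 := by linarith
  rw [div_lt_iff₀ d3]
  constructor <;> intro h <;> nlinarith

lemma slp_gt_left {a b c : ℝ × ℝ} (h1 : a.1 < b.1) (h2 : b.1 < c.1) :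
    slp a c < slp a b ↔ slp b c < slp a b := by
  rw [slp_avg h1 h2]
  have d3 : (0:ℝ) < c.1 - a.1 := by linarith
  rw [div_lt_iff₀ d3]
  constructor <;> intro h <;> nlinarith

lemma slp_gt_right {a b c : ℝ × ℝ} (h1 : a.1 < b.1) (h2 : b.1 < c.1) :
    slp b c < slp a c ↔ slp b c < slp a b := by
  rw [slp_avg h1 h2]
  have d3 : (0:ℝ) < c.1 - a.1 := by linarith
  rw [lt_div_iff₀ d3]
  constructor <;> intro h <;> nlinarith

lemma collinear_of_slp_eq {a b c : ℝ × ℝ} (h1 : a.1 < b.1) (h2 : b.1 < c.1)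
    (h : slp a b = slp b c) : Collinear ℝ ({a, b, c} : Set (ℝ × ℝ)) := by
  have db : b.1 - a.1 ≠ 0 := by linarith
  have dc : c.1 - a.1 ≠ 0 := by linarith
  have hac : slp a c = slp a b := by
    rw [slp_avg h1 h2, ← h]
    field_simp
    ring
  have h2' : (c.2 - a.2) * (b.1 - a.1) = (b.2 - a.2) * (c.1 - a.1) := by
    unfold slp at hac
    field_simp at hac
    linarith [hac]
  have hc : ∃ r : ℝ, c = r • (b - a) +ᵥ a := by
    refine ⟨(c.1 - a.1) / (b.1 - a.1), ?_⟩
    have : ∀ x y : ℝ × ℝ, x +ᵥ y = x + y := fun _ _ => rfl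
    rw [this, Prod.ext_iff]
    constructor
    · simp only [Prod.fst_add, Prod.smul_fst, Prod.fst_sub, smul_eq_mul]
      field_simp
      ring
    · simp only [Prod.snd_add, Prod.smul_snd, Prod.snd_sub, smul_eq_mul]
      field_simp
      nlinarith [h2']
  rw [collinear_iff_exists_forall_eq_smul_vadd]
  refine ⟨a, b - a, ?_⟩
  intro p hp
  rcases hp with rfl | rfl | hp
  · exact ⟨0, by simp⟩
  · exact ⟨1, by simp⟩
  · rw [Set.mem_singleton_iff] at hp
    subst hp
    exact hc

/-- all-triples cup condition -/
def IsCup (A : Finset (ℝ × ℝ)) : Prop :=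
  ∀ p ∈ A, ∀ q ∈ A, ∀ r ∈ A, p.1 < q.1 → q.1 < r.1 → slp p q < slp q r

def IsCap (A : Finset (ℝ × ℝ)) : Prop :=
  ∀ p ∈ A, ∀ q ∈ A, ∀ r ∈ A, p.1 < q.1 → q.1 < r.1 → slp q r < slp p q

lemma IsCup.subset {A B : Finset (ℝ × ℝ)} (h : B ⊆ A) (hA : IsCup A) : IsCup B :=
  fun p hp q hq r hr => hA p (h hp) q (h hq) r (h hr)

lemma IsCap.subset {A B : Finset (ℝ × ℝ)} (h : B ⊆ A) (hA : IsCap A) : IsCap B :=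
  fun p hp q hq r hr => hA p (h hp) q (h hq) r (h hr)

lemma not_mem_hull {A : Finset (ℝ × ℝ)} {p : ℝ × ℝ} (α β γ : ℝ)
    (hq : ∀ q ∈ A, 0 ≤ α * q.1 + β * q.2 + γ) (hp : α * p.1 + β * p.2 + γ < 0) :
    p ∉ convexHull ℝ (A : Set (ℝ × ℝ)) := by
  intro hmem
  have hlin : IsLinearMap ℝ (fun z : ℝ × ℝ => α * z.1 + β * z.2) := by
    constructor
    · intro x y; simp only [Prod.fst_add, Prod.snd_add]; ring
    · intro c x; simp only [Prod.smul_fst, Prod.smul_snd, smul_eq_mul]; ring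
  have hconv : Convex ℝ {z : ℝ × ℝ | -γ ≤ α * z.1 + β * z.2} :=
    convex_halfSpace_ge hlin (-γ)
  have hsub : (A : Set (ℝ × ℝ)) ⊆ {z : ℝ × ℝ | -γ ≤ α * z.1 + β * z.2} := by
    intro q hq'
    have := hq q hq'
    simp only [Set.mem_setOf_eq]
    linarith
  have := convexHull_min hsub hconv hmem
  simp only [Set.mem_setOf_eq] at this
  linarith

lemma cup_convexPos {T : Finset (ℝ × ℝ)} (hx : ∀ p ∈ T, ∀ q ∈ T, p.1 = q.1 → p = q)
    (hT : IsCup T) : ConvexPos T := by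
  intro p hp
  by_cases hne : (T.erase p).Nonempty
  swap
  · rw [Finset.not_nonempty_iff_eq_empty] at hne
    simp [hne]
  obtain ⟨m, hm, hmmin⟩ := Finset.exists_min_image (T.erase p) (·.1) hne
  obtain ⟨M, hM, hMmax⟩ := Finset.exists_max_image (T.erase p) (·.1) hne
  by_cases hlow : p.1 < m.1
  · refine not_mem_hull 1 0 (-m.1) (fun q hq => ?_) (by simp; linarith)
    have := hmmin q hq
    simp only [one_mul, zero_mul, add_zero]
    linarith
  by_cases hhigh : M.1 < p.1
  · refine not_mem_hull (-1) 0 M.1 (fun q hq => ?_) (by simp; linarith)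
    have := hMmax q hq
    simp only [neg_one_mul, zero_mul, add_zero]
    linarith
  push_neg at hlow hhigh
  have hmp : m.1 < p.1 := by
    rcases lt_or_eq_of_le hlow with h | h
    · exact h
    · exact absurd (hx m (Finset.mem_erase.1 hm).2 p hp h) (Finset.mem_erase.1 hm).1
  have hpM : p.1 < M.1 := by
    rcases lt_or_eq_of_le hhigh with h | h
    · exact h
    · exact absurd (hx M (Finset.mem_erase.1 hM).2 p hp h.symm) (Finset.mem_erase.1 hM).1
  classical
  set B := (T.erase p).filter (fun q => q.1 < p.1) with hB
  have hBne : B.Nonempty := ⟨m, by simp [hB, Finset.mem_filter, hm, hmp]⟩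
  obtain ⟨u, hu, humax⟩ := Finset.exists_max_image B (·.1) hBne
  set C := (T.erase p).filter (fun q => p.1 < q.1) with hC
  have hCne : C.Nonempty := ⟨M, by simp [hC, Finset.mem_filter, hM, hpM]⟩
  obtain ⟨w, hw, hwmin⟩ := Finset.exists_min_image C (·.1) hCne
  have huT : u ∈ T := (Finset.mem_erase.1 (Finset.mem_filter.1 hu).1).2
  have hup : u.1 < p.1 := (Finset.mem_filter.1 hu).2
  have hwT : w ∈ T := (Finset.mem_erase.1 (Finset.mem_filter.1 hw).1).2
  have hpw : p.1 < w.1 := (Finset.mem_filter.1 hw).2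
  have huw : u.1 < w.1 := hup.trans hpw
  refine not_mem_hull (-(w.2 - u.2)) (w.1 - u.1) ((w.2 - u.2) * u.1 - (w.1 - u.1) * u.2)
    (fun q hq => ?_) ?_
  · by_cases hqu : q = u
    · subst hqu
      have h0 : -(w.2 - q.2) * q.1 + (w.1 - q.1) * q.2 + ((w.2 - q.2) * q.1 - (w.1 - q.1) * q.2) = 0 := by ring
      linarith
    by_cases hqw : q = w
    · subst hqw
      have h0 : -(q.2 - u.2) * q.1 + (q.1 - u.1) * q.2 + ((q.2 - u.2) * u.1 - (q.1 - u.1) * u.2) = 0 := by ring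
      linarith
    have hqT : q ∈ T := (Finset.mem_erase.1 hq).2
    have hqp : q ≠ p := (Finset.mem_erase.1 hq).1
    have hq1 : q.1 ≠ p.1 := fun h => hqp (hx q hqT p hp h)
    rcases hq1.lt_or_gt with h | h
    · -- q.1 < p.1 so q ∈ B, q.1 < u.1
      have hqB : q ∈ B := Finset.mem_filter.2 ⟨hq, h⟩
      have hqu1 : q.1 < u.1 := by
        rcases lt_or_eq_of_le (humax q hqB) with h' | h'
        · exact h'
        · exact absurd (hx q hqT u huT h') hqu
      have hs : slp q u < slp u w := hT q hqT u huT w hwT hqu1 huw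
      unfold slp at hs
      rw [div_lt_div_iff₀ (by linarith) (by linarith)] at hs
      nlinarith
    · -- q.1 > p.1, q.1 > w.1
      have hqC : q ∈ C := Finset.mem_filter.2 ⟨hq, h⟩
      have hwq1 : w.1 < q.1 := by
        rcases lt_or_eq_of_le (hwmin q hqC) with h' | h'
        · exact h'
        · exact absurd (hx w hwT q hqT h') (fun e => hqw e.symm)
      have hs : slp u w < slp u q := (slp_lt_left huw hwq1).2 (hT u huT w hwT q hqT huw hwq1)
      unfold slp at hs
      rw [div_lt_div_iff₀ (by linarith) (by linarith)] at hs
      nlinarith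
  · have hs : slp u p < slp u w := (slp_lt_left hup hpw).2 (hT u huT p hp w hwT hup hpw)
    unfold slp at hs
    rw [div_lt_div_iff₀ (by linarith) (by linarith)] at hs
    nlinarith

lemma Collinear.linear_image {s : Set (ℝ × ℝ)} (f : (ℝ × ℝ) →ₗ[ℝ] (ℝ × ℝ))
    (h : Collinear ℝ s) : Collinear ℝ (⇑f '' s) := by
  rw [collinear_iff_exists_forall_eq_smul_vadd] at h ⊢
  obtain ⟨p₀, v, hv⟩ := h
  refine ⟨f p₀, f v, ?_⟩
  rintro _ ⟨p, hp, rfl⟩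
  obtain ⟨r, hr⟩ := hv p hp
  refine ⟨r, ?_⟩
  rw [hr]
  have : ∀ x y : ℝ × ℝ, x +ᵥ y = x + y := fun _ _ => rfl
  rw [this, this, map_add, map_smul]

lemma ConvexPos.image (e : (ℝ × ℝ) ≃ₗ[ℝ] (ℝ × ℝ)) {T : Finset (ℝ × ℝ)}
    (h : ConvexPos T) : ConvexPos (T.image ⇑e) := by
  classical
  intro p' hp'
  obtain ⟨p, hp, rfl⟩ := Finset.mem_image.1 hp'
  intro hmem
  apply h p hp
  have hinj : Function.Injective ⇑e := e.injective
  rw [← Finset.image_erase hinj, Finset.coe_image] at hmem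
  have himg : ⇑e '' (convexHull ℝ ((T.erase p : Finset (ℝ × ℝ)) : Set (ℝ × ℝ)))
      = convexHull ℝ (⇑e '' ((T.erase p : Finset (ℝ × ℝ)) : Set (ℝ × ℝ))) := by
    exact e.toLinearMap.image_convexHull _
  rw [← himg] at hmem
  obtain ⟨q, hq, hq2⟩ := hmem
  rwa [hinj hq2] at hq

def negY : (ℝ × ℝ) ≃ₗ[ℝ] (ℝ × ℝ) := (LinearEquiv.refl ℝ ℝ).prodCongr (LinearEquiv.neg ℝ)

@[simp] lemma negY_apply (p : ℝ × ℝ) : negY p = (p.1, -p.2) := rfl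

lemma slp_negY (p q : ℝ × ℝ) : slp (negY p) (negY q) = -slp p q := by
  simp only [negY_apply]
  unfold slp
  simp only
  rw [← neg_div]
  ring_nf

lemma cap_convexPos {T : Finset (ℝ × ℝ)} (hx : ∀ p ∈ T, ∀ q ∈ T, p.1 = q.1 → p = q)
    (hT : IsCap T) : ConvexPos T := by
  classical
  have hx' : ∀ p ∈ T.image ⇑negY, ∀ q ∈ T.image ⇑negY, p.1 = q.1 → p = q := by
    rintro _ hp _ hq h
    obtain ⟨p, hp2, rfl⟩ := Finset.mem_image.1 hp
    obtain ⟨q, hq2, rfl⟩ := Finset.mem_image.1 hq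
    simp only [negY_apply] at h ⊢
    rw [hx p hp2 q hq2 h]
  have hcup : IsCup (T.image ⇑negY) := by
    rintro _ hp _ hq _ hr h1 h2
    obtain ⟨p, hp2, rfl⟩ := Finset.mem_image.1 hp
    obtain ⟨q, hq2, rfl⟩ := Finset.mem_image.1 hq
    obtain ⟨r, hr2, rfl⟩ := Finset.mem_image.1 hr
    simp only [negY_apply] at h1 h2
    rw [slp_negY, slp_negY]
    have := hT p hp2 q hq2 r hr2 h1 h2
    linarith
  have h1 : ConvexPos (T.image ⇑negY) := cup_convexPos hx' hcup
  have h2 : ConvexPos ((T.image ⇑negY).image ⇑negY) := h1.image negY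
  have h3 : (T.image ⇑negY).image ⇑negY = T := by
    rw [Finset.image_image]
    have : ⇑negY ∘ ⇑negY = id := by
      funext z
      simp
    rw [this, Finset.image_id]
  rwa [h3] at h2

lemma no_triple {C : Finset (ℝ × ℝ)} (h : C.card ≤ 2) {p q r : ℝ × ℝ}
    (hp : p ∈ C) (hq : q ∈ C) (hr : r ∈ C) (h1 : p.1 < q.1) (h2 : q.1 < r.1) : False := by
  classical
  have hpq : p ≠ q := fun e => by rw [e] at h1; exact lt_irrefl _ h1
  have hqr : q ≠ r := fun e => by rw [e] at h2; exact lt_irrefl _ h2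
  have hpr : p ≠ r := fun e => by rw [e] at h1; exact absurd (h1.trans h2) (lt_irrefl _)
  have hsub : ({p, q, r} : Finset (ℝ × ℝ)) ⊆ C := by
    intro z hz
    simp only [Finset.mem_insert, Finset.mem_singleton] at hz
    rcases hz with rfl | rfl | rfl <;> assumption
  have h3 : ({p, q, r} : Finset (ℝ × ℝ)).card = 3 := by
    rw [Finset.card_insert_of_notMem (by simp [hpq, hpr]),
      Finset.card_insert_of_notMem (by simp [hqr]), Finset.card_singleton]
  have := Finset.card_le_card hsub
  omega

lemma cupcap : ∀ (k a b : ℕ), a + b ≤ k → 2 ≤ a → 2 ≤ b →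
    ∀ S : Finset (ℝ × ℝ),
    (∀ p ∈ S, ∀ q ∈ S, p.1 = q.1 → p = q) →
    (∀ p ∈ S, ∀ q ∈ S, ∀ r ∈ S, p.1 < q.1 → q.1 < r.1 → slp p q ≠ slp q r) →
    Nat.choose (a + b - 4) (a - 2) + 1 ≤ S.card →
    ∃ C ⊆ S, (C.card = a ∧ IsCup C) ∨ (C.card = b ∧ IsCap C) := by
  intro k
  induction k with
  | zero => intro a b h ha hb; omega
  | succ k ih =>
    intro a b hab ha hb S hx hgp hcard
    by_cases ha2 : a = 2
    · subst ha2
      have h2 : 2 ≤ S.card := by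
        rw [show (2:ℕ) - 2 = 0 from rfl, Nat.choose_zero_right] at hcard
        omega
      obtain ⟨C, hCS, hC2⟩ := Finset.exists_subset_card_eq h2
      exact ⟨C, hCS, Or.inl ⟨hC2, fun p hp q hq r hr h1 h2' =>
        absurd (no_triple (le_of_eq hC2) hp hq hr h1 h2') not_false⟩⟩
    by_cases hb2 : b = 2
    · subst hb2
      have h2 : 2 ≤ S.card := by
        rw [show a + 2 - 4 = a - 2 from by omega, Nat.choose_self] at hcard
        omega
      obtain ⟨C, hCS, hC2⟩ := Finset.exists_subset_card_eq h2
      exact ⟨C, hCS, Or.inr ⟨hC2, fun p hp q hq r hr h1 h2' =>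
        absurd (no_triple (le_of_eq hC2) hp hq hr h1 h2') not_false⟩⟩
    have ha3 : 3 ≤ a := by omega
    have hb3 : 3 ≤ b := by omega
    have hpascal : Nat.choose (a + b - 4) (a - 2)
        = Nat.choose (a + b - 5) (a - 3) + Nat.choose (a + b - 5) (a - 2) := by
      have e1 : a + b - 4 = (a + b - 5) + 1 := by omega
      have e2 : a - 2 = (a - 3) + 1 := by omega
      rw [e1, e2, Nat.choose_succ_succ, Nat.succ_eq_add_one, ← e2]
    set E := S.filter (fun p => ∃ C ⊆ S, C.card = a - 1 ∧ IsCup C ∧ p ∈ C ∧ ∀ q ∈ C, q.1 ≤ p.1)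
      with hEdef
    have hE_sub : E ⊆ S := Finset.filter_subset _ _
    rcases le_or_gt (S \ E).card (Nat.choose (a + b - 5) (a - 3)) with hE1 | hE1
    · -- E is big: recurse on (a, b-1) inside E
      have hEcard : Nat.choose (a + b - 5) (a - 2) + 1 ≤ E.card := by
        have := Finset.card_sdiff_add_card_eq_card hE_sub
        omega
      have hEcard' : Nat.choose (a + (b - 1) - 4) (a - 2) + 1 ≤ E.card := by
        rw [show a + (b - 1) - 4 = a + b - 5 from by omega]
        exact hEcard
      obtain ⟨Q, hQE, hQ⟩ := ih a (b - 1) (by omega) ha (by omega) E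
        (fun p hp q hq => hx p (hE_sub hp) q (hE_sub hq))
        (fun p hp q hq r hr => hgp p (hE_sub hp) q (hE_sub hq) r (hE_sub hr)) hEcard'
      have hQS : Q ⊆ S := hQE.trans hE_sub
      rcases hQ with ⟨hQcard, hQcup⟩ | ⟨hQcard, hQcap⟩
      · exact ⟨Q, hQS, Or.inl ⟨hQcard, hQcup⟩⟩
      -- Q is a (b-1)-cap
      have hQne : Q.Nonempty := Finset.card_pos.1 (by omega)
      obtain ⟨q1, hq1mem, hq1min⟩ := Finset.exists_min_image Q (·.1) hQne
      obtain ⟨-, C, hCS, hCcard, hCcup, hq1C, hq1max⟩ := Finset.mem_filter.1 (hQE hq1mem)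
      have hQe_ne : (Q.erase q1).Nonempty := by
        rw [← Finset.card_pos, Finset.card_erase_of_mem hq1mem]
        omega
      obtain ⟨q2, hq2e, hq2min⟩ := Finset.exists_min_image (Q.erase q1) (·.1) hQe_ne
      have hq2Q : q2 ∈ Q := (Finset.mem_erase.1 hq2e).2
      have hq2ne : q2 ≠ q1 := (Finset.mem_erase.1 hq2e).1
      have hq12 : q1.1 < q2.1 := by
        rcases lt_or_eq_of_le (hq1min q2 hq2Q) with h | h
        · exact h
        · exact absurd (hx q2 (hQS hq2Q) q1 (hQS hq1mem) h.symm) hq2ne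
      have hCxlt : ∀ p ∈ C, p ≠ q1 → p.1 < q1.1 := by
        intro p hp hpne
        rcases lt_or_eq_of_le (hq1max p hp) with h | h
        · exact h
        · exact absurd (hx p (hCS hp) q1 (hQS hq1mem) h) hpne
      have hQxlt : ∀ q ∈ Q, q ≠ q1 → q1.1 < q.1 := by
        intro q hq hqne
        rcases lt_or_eq_of_le (hq1min q hq) with h | h
        · exact h
        · exact absurd (hx q (hQS hq) q1 (hQS hq1mem) h.symm) hqne
      have hQ2xlt : ∀ q ∈ Q, q ≠ q1 → q ≠ q2 → q2.1 < q.1 := by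
        intro q hq hne1 hne2
        have hqe : q ∈ Q.erase q1 := Finset.mem_erase.2 ⟨hne1, hq⟩
        rcases lt_or_eq_of_le (hq2min q hqe) with h | h
        · exact h
        · exact absurd (hx q (hQS hq) q2 (hQS hq2Q) h.symm) hne2
      by_cases hext : ∀ p ∈ C, p ≠ q1 → slp p q1 < slp q1 q2
      · -- extend the cup C by q2
        have hq2top : ∀ z ∈ C, z.1 < q2.1 := fun z hz => lt_of_le_of_lt (hq1max z hz) hq12
        have hq2nC : q2 ∉ C := fun h => lt_irrefl _ (hq2top q2 h)
        refine ⟨insert q2 C, Finset.insert_subset (hQS hq2Q) hCS, Or.inl ⟨?_, ?_⟩⟩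
        · rw [Finset.card_insert_of_notMem hq2nC, hCcard]
          omega
        · intro p hp q hq r hr h1 h2
          rcases Finset.mem_insert.1 hr with rfl | hrC
          · -- r = q2
            rcases Finset.mem_insert.1 hp with rfl | hpC
            · exfalso
              rcases Finset.mem_insert.1 hq with rfl | hqC
              · exact lt_irrefl _ h1
              · exact absurd h1 (not_lt.2 (le_of_lt (hq2top q hqC)))
            rcases Finset.mem_insert.1 hq with rfl | hqC
            · exact absurd h2 (lt_irrefl _)
            -- p, q ∈ C; goal : slp p q < slp q r with r = q2
            by_cases hqq1 : q = q1
            · subst hqq1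
              exact hext p hpC (fun e => by rw [e] at h1; exact lt_irrefl _ h1)
            · have hqx : q.1 < q1.1 := hCxlt q hqC hqq1
              have h3 : slp q q1 < slp q1 r := hext q hqC hqq1
              have h4 : slp q q1 < slp q r := (slp_lt_left hqx hq12).2 h3
              have h5 : slp p q < slp q q1 := hCcup p hpC q hqC q1 hq1C h1 hqx
              linarith
          · -- r ∈ C : then p, q ∈ C as well
            rcases Finset.mem_insert.1 hp with rfl | hpC
            · exfalso
              rcases Finset.mem_insert.1 hq with rfl | hqC
              · exact lt_irrefl _ h1
              · exact absurd h1 (not_lt.2 (le_of_lt (hq2top q hqC)))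
            rcases Finset.mem_insert.1 hq with rfl | hqC
            · exact absurd h2 (not_lt.2 (le_of_lt (hq2top r hrC)))
            exact hCcup p hpC q hqC r hrC h1 h2
      · -- get a b-cap by prepending some p to Q
        push_neg at hext
        obtain ⟨p, hpC, hpne, hge⟩ := hext
        have hpx : p.1 < q1.1 := hCxlt p hpC hpne
        have hlt : slp q1 q2 < slp p q1 :=
          lt_of_le_of_ne hge (fun e => hgp p (hCS hpC) q1 (hQS hq1mem) q2 (hQS hq2Q) hpx hq12 e.symm)
        have hpbot : ∀ z ∈ Q, p.1 < z.1 := fun z hz => lt_of_lt_of_le hpx (hq1min z hz)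
        have hpnQ : p ∉ Q := fun h => lt_irrefl _ (hpbot p h)
        refine ⟨insert p Q, Finset.insert_subset (hCS hpC) hQS, Or.inr ⟨?_, ?_⟩⟩
        · rw [Finset.card_insert_of_notMem hpnQ, hQcard]
          omega
        · intro u hu v hv w hw h1 h2
          rcases Finset.mem_insert.1 hu with rfl | huQ
          · -- u = p
            rcases Finset.mem_insert.1 hv with rfl | hvQ
            · exact absurd h1 (lt_irrefl _)
            rcases Finset.mem_insert.1 hw with rfl | hwQ
            · exact absurd h2 (not_lt.2 (le_of_lt (hpbot v hvQ)))
            -- goal : slp v w < slp p v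
            by_cases hvq1 : v = q1
            · subst hvq1
              by_cases hwq2 : w = q2
              · rw [hwq2]; exact hlt
              · have hwne1 : w ≠ v := fun e => by rw [e] at h2; exact lt_irrefl _ h2
                have hw2 : q2.1 < w.1 := hQ2xlt w hwQ hwne1 hwq2
                have hc : slp q2 w < slp v q2 := hQcap v hq1mem q2 hq2Q w hwQ hq12 hw2
                have h6 : slp v w < slp v q2 := (slp_gt_left hq12 hw2).2 hc
                linarith
            · have hq1vx : q1.1 < v.1 := hQxlt v hvQ hvq1
              have hkey : slp q1 v ≤ slp q1 q2 := by
                by_cases hvq2 : v = q2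
                · subst hvq2; exact le_refl _
                · have hv2 : q2.1 < v.1 := hQ2xlt v hvQ hvq1 hvq2
                  have hc : slp q2 v < slp q1 q2 := hQcap q1 hq1mem q2 hq2Q v hvQ hq12 hv2
                  exact le_of_lt ((slp_gt_left hq12 hv2).2 hc)
              have hpq1v : slp q1 v < slp u q1 := lt_of_le_of_lt hkey hlt
              have h5 : slp q1 v < slp u v := (slp_gt_right hpx hq1vx).2 hpq1v
              have h6 : slp v w < slp q1 v := hQcap q1 hq1mem v hvQ w hwQ hq1vx h2
              linarith
          · rcases Finset.mem_insert.1 hv with rfl | hvQ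
            · exact absurd h1 (not_lt.2 (le_of_lt (hpbot u huQ)))
            rcases Finset.mem_insert.1 hw with rfl | hwQ
            · exact absurd h2 (not_lt.2 (le_of_lt (hpbot v hvQ)))
            exact hQcap u huQ v hvQ w hwQ h1 h2
    · -- S \ E is big: recurse on (a-1, b) inside S \ E
      have hcard' : Nat.choose ((a - 1) + b - 4) ((a - 1) - 2) + 1 ≤ (S \ E).card := by
        rw [show (a - 1) + b - 4 = a + b - 5 from by omega,
          show (a - 1) - 2 = a - 3 from by omega]
        omega
      have hsdiff : S \ E ⊆ S := Finset.sdiff_subset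
      obtain ⟨C, hCsub, hC⟩ := ih (a - 1) b (by omega) (by omega) hb (S \ E)
        (fun p hp q hq => hx p (hsdiff hp) q (hsdiff hq))
        (fun p hp q hq r hr => hgp p (hsdiff hp) q (hsdiff hq) r (hsdiff hr)) hcard'
      have hCS : C ⊆ S := hCsub.trans hsdiff
      rcases hC with ⟨hCcard, hCcup⟩ | ⟨hCcard, hCcap⟩
      · -- (a-1)-cup inside S \ E : contradiction with definition of E
        exfalso
        have hCne : C.Nonempty := Finset.card_pos.1 (by omega)
        obtain ⟨m, hm, hmmax⟩ := Finset.exists_max_image C (·.1) hCne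
        have hmE : m ∈ E :=
          Finset.mem_filter.2 ⟨hCS hm, C, hCS, hCcard, hCcup, hm, fun q hq => hmmax q hq⟩
        exact (Finset.mem_sdiff.1 (hCsub hm)).2 hmE
      · exact ⟨C, hCS, Or.inr ⟨hCcard, hCcap⟩⟩

def shear (ε : ℝ) : (ℝ × ℝ) ≃ₗ[ℝ] (ℝ × ℝ) :=
  LinearEquiv.ofLinear
    ((LinearMap.fst ℝ ℝ ℝ + ε • LinearMap.snd ℝ ℝ ℝ).prod (LinearMap.snd ℝ ℝ ℝ))
    ((LinearMap.fst ℝ ℝ ℝ + (-ε) • LinearMap.snd ℝ ℝ ℝ).prod (LinearMap.snd ℝ ℝ ℝ))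
    (by ext <;> simp)
    (by ext <;> simp)

@[simp] lemma shear_apply (ε : ℝ) (p : ℝ × ℝ) : shear ε p = (p.1 + ε * p.2, p.2) := rfl

lemma GenPos.image {S : Finset (ℝ × ℝ)} (hgen : GenPos S) (e : (ℝ × ℝ) ≃ₗ[ℝ] (ℝ × ℝ)) :
    GenPos (S.image ⇑e) := by
  classical
  intro T' hT' hT3 hcol
  refine hgen (T'.image ⇑e.symm) ?_ ?_ ?_
  · intro z hz
    obtain ⟨z', hz', rfl⟩ := Finset.mem_image.1 hz
    obtain ⟨s, hs, rfl⟩ := Finset.mem_image.1 (hT' hz')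
    simpa using hs
  · rw [Finset.card_image_of_injective _ e.symm.injective, hT3]
  · have hc : ((T'.image ⇑e.symm : Finset (ℝ × ℝ)) : Set (ℝ × ℝ))
        = ⇑e.symm.toLinearMap '' (T' : Set (ℝ × ℝ)) := by
      rw [Finset.coe_image]
      rfl
    rw [hc]
    exact hcol.linear_image e.symm.toLinearMap

lemma exists_shear_eps (S : Finset (ℝ × ℝ)) :
    ∃ ε : ℝ, ∀ p ∈ S, ∀ q ∈ S, p.1 + ε * p.2 = q.1 + ε * q.2 → p = q := by
  classical
  obtain ⟨ε, hε⟩ := Infinite.exists_notMem_finset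
    ((S ×ˢ S).image (fun pq : (ℝ × ℝ) × (ℝ × ℝ) => (pq.2.1 - pq.1.1) / (pq.1.2 - pq.2.2)))
  refine ⟨ε, ?_⟩
  intro p hp q hq h
  by_cases hy : p.2 = q.2
  · rw [hy] at h
    have h1 : p.1 = q.1 := by linarith
    exact Prod.ext h1 hy
  · exfalso
    apply hε
    have hne : p.2 - q.2 ≠ 0 := sub_ne_zero.2 hy
    have heps : ε = (q.1 - p.1) / (p.2 - q.2) := by
      field_simp
      linarith
    rw [heps]
    exact Finset.mem_image.2 ⟨(p, q), Finset.mem_product.2 ⟨hp, hq⟩, rfl⟩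

end ErdosSzekeresAux

/-- Erdős–Szekeres theorem: any set of at least `C(2n-4, n-2) + 1` points in general
position in the plane contains `n` points in convex position. -/
theorem erdos_szekeres_convex_position (n : ℕ) (hn : 3 ≤ n) (S : Finset (ℝ × ℝ))
    (hgen : GenPos S) (hcard : Nat.choose (2 * n - 4) (n - 2) + 1 ≤ S.card) :
    ∃ T ⊆ S, T.card = n ∧ ConvexPos T := by
  classical
  obtain ⟨ε, hε⟩ := exists_shear_eps S
  set e := shear ε with he
  set S' := S.image ⇑e with hS'
  have hinj : Function.Injective ⇑e := e.injective
  have hcard' : Nat.choose (n + n - 4) (n - 2) + 1 ≤ S'.card := by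
    rw [hS', Finset.card_image_of_injective _ hinj, show n + n - 4 = 2 * n - 4 from by omega]
    exact hcard
  have hx' : ∀ p ∈ S', ∀ q ∈ S', p.1 = q.1 → p = q := by
    rintro _ hp _ hq h
    obtain ⟨p, hp2, rfl⟩ := Finset.mem_image.1 hp
    obtain ⟨q, hq2, rfl⟩ := Finset.mem_image.1 hq
    simp only [he, shear_apply] at h
    rw [hε p hp2 q hq2 h]
  have hgen' : GenPos S' := hgen.image e
  have hgp' : ∀ p ∈ S', ∀ q ∈ S', ∀ r ∈ S', p.1 < q.1 → q.1 < r.1 → slp p q ≠ slp q r := by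
    intro p hp q hq r hr h1 h2 heq
    have hpq : p ≠ q := fun h => by rw [h] at h1; exact lt_irrefl _ h1
    have hqr : q ≠ r := fun h => by rw [h] at h2; exact lt_irrefl _ h2
    have hpr : p ≠ r := fun h => by rw [h] at h1; exact absurd (h1.trans h2) (lt_irrefl _)
    have hsub : ({p, q, r} : Finset (ℝ × ℝ)) ⊆ S' := by
      intro z hz
      simp only [Finset.mem_insert, Finset.mem_singleton] at hz
      rcases hz with rfl | rfl | rfl <;> assumption
    have hc3 : ({p, q, r} : Finset (ℝ × ℝ)).card = 3 := by
      rw [Finset.card_insert_of_notMem (by simp [hpq, hpr]),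
        Finset.card_insert_of_notMem (by simp [hqr]), Finset.card_singleton]
    apply hgen' _ hsub hc3
    have hcoe : (({p, q, r} : Finset (ℝ × ℝ)) : Set (ℝ × ℝ)) = {p, q, r} := by simp
    rw [hcoe]
    exact collinear_of_slp_eq h1 h2 heq
  obtain ⟨T', hT'sub, hT'⟩ := cupcap (n + n) n n le_rfl (by omega) (by omega) S' hx' hgp' hcard'
  have hxT : ∀ p ∈ T', ∀ q ∈ T', p.1 = q.1 → p = q :=
    fun p hp q hq => hx' p (hT'sub hp) q (hT'sub hq)
  have hConv : ConvexPos T' := by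
    rcases hT' with ⟨-, hcup⟩ | ⟨-, hcap⟩
    · exact cup_convexPos hxT hcup
    · exact cap_convexPos hxT hcap
  have hcardT : T'.card = n := by rcases hT' with ⟨hc, -⟩ | ⟨hc, -⟩ <;> exact hc
  refine ⟨T'.image ⇑e.symm, ?_, ?_, ?_⟩
  · intro z hz
    obtain ⟨z', hz', rfl⟩ := Finset.mem_image.1 hz
    obtain ⟨s, hs, rfl⟩ := Finset.mem_image.1 (hT'sub hz')
    simpa using hs
  · rw [Finset.card_image_of_injective _ e.symm.injective, hcardT]
  · exact hConv.image e.symm
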